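/- Let A be self-adjoint and bounded below, let V be a bounded nonnegative potential with A + V self-adjoint on the same domain, and suppose for some a > 0 and integer k ≥ 1 the difference (A+V+a)^{−k} − (A+a)^{−k} lies in 𝒥_p for some 0 < p ≤ 1. Then for any compact interval [a₀,b] with b > −a, ∫_{a₀}^b |ξ(λ; A+V, A)|^{1/p} dλ ≤ k^{−1}(b+a)^{k+1} ∫_ℝ |ξ(t; (A+V+a)^{−k}, (A+a)^{−k})|^{1/p} dt, where ξ(λ; A+V, A) = −ξ((λ+a)^{−k}; (A+V+a)^{−k}, (A+a)^{−k}). -/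

import Mathlib

open MeasureTheory

theorem lintegral_image_eq_lintegral_abs_deriv_mul' {s : Set ℝ} {f : ℝ → ℝ} {f' : ℝ → ℝ}
    (hs : MeasurableSet s) (hf' : ∀ x ∈ s, HasDerivWithinAt f (f' x) s x)
    (hf : Set.InjOn f s) (g : ℝ → ENNReal) :
    ∫⁻ x in f '' s, g x = ∫⁻ x in s, ENNReal.ofReal |f' x| * g (f x) := by
  simpa only [ContinuousLinearMap.det_toSpanSingleton] using
    lintegral_image_eq_lintegral_abs_det_fderiv_mul volume hs
      (fun x hx => (hf' x hx).hasFDerivWithinAt) hf g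

/-- The change-of-variables estimate behind the invariance principle: if
`ξ(λ) = -η((λ+a)^{-k})` (so `|ξ(λ)| = |η((λ+a)^{-k})|`), then
`∫_{a₀}^b |ξ(λ)|^{1/p} dλ ≤ k⁻¹ (b+a)^{k+1} ∫_ℝ |η(t)|^{1/p} dt`. -/
theorem invariance_principle_change_of_variables_estimate
    (η : ℝ → ℝ) (hη : Measurable η) (a : ℝ) (ha : 0 < a)
    (k : ℕ) (hk : 1 ≤ k) (p : ℝ) (hp0 : 0 < p) (hp1 : p ≤ 1)
    (a₀ b : ℝ) (ha₀ : -a < a₀) (hb : a₀ ≤ b)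
    (ξ : ℝ → ℝ) (hξ : ∀ lam : ℝ, ξ lam = -η ((lam + a) ^ (-(k : ℝ)))) :
    (∫⁻ lam in Set.Ioc a₀ b, ENNReal.ofReal (|ξ lam| ^ (1 / p))) ≤
      ENNReal.ofReal ((k : ℝ)⁻¹ * (b + a) ^ (k + 1)) *
        ∫⁻ t, ENNReal.ofReal (|η t| ^ (1 / p)) := by
  set φ : ℝ → ℝ := fun lam => (lam + a) ^ (-(k : ℝ)) with hφ
  set g : ℝ → ENNReal := fun t => ENNReal.ofReal (|η t| ^ (1 / p)) with hg
  set s : Set ℝ := Set.Ioc a₀ b with hsdef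
  have hs : MeasurableSet s := measurableSet_Ioc
  have hpos : ∀ x ∈ s, 0 < x + a := by
    intro x hx
    have : -a < x := lt_of_lt_of_le ha₀ (le_of_lt hx.1)
    linarith
  have hderiv : ∀ x ∈ s,
      HasDerivWithinAt φ (-(k : ℝ) * (x + a) ^ (-(k : ℝ) - 1)) s x := by
    intro x hx
    have h1 : HasDerivAt (fun y : ℝ => y + a) 1 x := (hasDerivAt_id x).add_const a
    have h2 := h1.rpow_const (p := -(k : ℝ)) (Or.inl (ne_of_gt (hpos x hx)))
    exact h2.hasDerivWithinAt.congr_deriv (by ring)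
  have hinj : Set.InjOn φ s := by
    have hanti : StrictAntiOn φ s := by
      intro x hx y hy hxy
      exact Real.rpow_lt_rpow_of_neg (by linarith [hpos x hx]) (by linarith)
        (by simp; exact_mod_cast Nat.pos_of_ne_zero (by omega))
    exact hanti.injOn
  have key := lintegral_image_eq_lintegral_abs_deriv_mul' hs hderiv hinj g
  have hC : (0:ℝ) ≤ (k : ℝ)⁻¹ * (b + a) ^ (k + 1) := by
    have hba : (0:ℝ) < b + a := by linarith
    positivity
  -- Step 1: rewrite integrand
  have heq : (∫⁻ lam in s, ENNReal.ofReal (|ξ lam| ^ (1 / p))) =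
      ∫⁻ lam in s, g (φ lam) := by
    refine lintegral_congr fun lam => ?_
    rw [hξ lam, abs_neg]
  rw [heq]
  -- Step 2: pointwise bound
  have hbound : ∀ lam ∈ s, g (φ lam) ≤
      ENNReal.ofReal ((k : ℝ)⁻¹ * (b + a) ^ (k + 1)) *
        (ENNReal.ofReal |(-(k : ℝ) * (lam + a) ^ (-(k : ℝ) - 1))| * g (φ lam)) := by
    intro lam hlam
    have hla : 0 < lam + a := hpos lam hlam
    have hba : 0 < b + a := by linarith [hlam.2]
    have hkpos : (0:ℝ) < (k : ℝ) := by exact_mod_cast Nat.pos_of_ne_zero (by omega)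
    have habs : |(-(k : ℝ) * (lam + a) ^ (-(k : ℝ) - 1))| =
        (k : ℝ) * (lam + a) ^ (-(k : ℝ) - 1) := by
      rw [abs_mul, abs_neg, abs_of_pos hkpos,
        abs_of_pos (Real.rpow_pos_of_pos hla _)]
    rw [habs]
    have h1 : (1:ℝ) ≤ (k : ℝ)⁻¹ * (b + a) ^ (k + 1) *
        ((k : ℝ) * (lam + a) ^ (-(k : ℝ) - 1)) := by
      have hrw : (lam + a) ^ (-(k : ℝ) - 1) = ((lam + a) ^ (k + 1 : ℕ))⁻¹ := by
        rw [show (-(k : ℝ) - 1) = -((k + 1 : ℕ) : ℝ) by push_cast; ring,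
          Real.rpow_neg hla.le, Real.rpow_natCast]
      rw [hrw]
      have hle : (lam + a) ^ (k + 1) ≤ (b + a) ^ (k + 1) :=
        pow_le_pow_left₀ hla.le (by linarith [hlam.2]) _
      have hlpow : (0:ℝ) < (lam + a) ^ (k + 1) := pow_pos hla _
      rw [show (k : ℝ)⁻¹ * (b + a) ^ (k + 1) * ((k : ℝ) * ((lam + a) ^ (k + 1))⁻¹)
          = (b + a) ^ (k + 1) * ((lam + a) ^ (k + 1))⁻¹ * ((k : ℝ)⁻¹ * (k : ℝ)) by ring,
        inv_mul_cancel₀ (ne_of_gt hkpos), mul_one, ← div_eq_mul_inv]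
      exact (one_le_div hlpow).mpr hle
    calc g (φ lam) = 1 * g (φ lam) := (one_mul _).symm
      _ ≤ ENNReal.ofReal ((k : ℝ)⁻¹ * (b + a) ^ (k + 1) *
            ((k : ℝ) * (lam + a) ^ (-(k : ℝ) - 1))) * g (φ lam) := by
          gcongr
          rw [show (1 : ENNReal) = ENNReal.ofReal 1 by simp]
          exact ENNReal.ofReal_le_ofReal h1
      _ = _ := by rw [ENNReal.ofReal_mul hC, mul_assoc]
  calc (∫⁻ lam in s, g (φ lam))
      ≤ ∫⁻ lam in s, ENNReal.ofReal ((k : ℝ)⁻¹ * (b + a) ^ (k + 1)) *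
          (ENNReal.ofReal |(-(k : ℝ) * (lam + a) ^ (-(k : ℝ) - 1))| * g (φ lam)) :=
        setLIntegral_mono' hs hbound
    _ = ENNReal.ofReal ((k : ℝ)⁻¹ * (b + a) ^ (k + 1)) *
          ∫⁻ lam in s, ENNReal.ofReal |(-(k : ℝ) * (lam + a) ^ (-(k : ℝ) - 1))| * g (φ lam) :=
        lintegral_const_mul' _ _ ENNReal.ofReal_ne_top
    _ = ENNReal.ofReal ((k : ℝ)⁻¹ * (b + a) ^ (k + 1)) * ∫⁻ x in φ '' s, g x := by rw [key]
    _ ≤ ENNReal.ofReal ((k : ℝ)⁻¹ * (b + a) ^ (k + 1)) * ∫⁻ t, g t := by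
        gcongr
        exact Measure.restrict_le_self
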